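/- For every n ≥ 2, the leading-index coefficient q_{n,⌊n/2⌋} (the number of maximum induced hypercubes of the matchable Lucas cube) equals 2 if n is even, and equals n if n is odd. -/

import Mathlib

open Polynomial

/-- The cube polynomials `Q n` of the matchable Lucas cubes. -/
noncomputable def Q : ℕ → Polynomial ℤ
  | 0 => 1
  | 1 => 2 + X
  | 2 => 3 + 2 * X
  | 3 => 4 + 3 * X
  | (n + 4) => Q (n + 3) + (1 + X) * Q (n + 2)

/-- `q n k` : the number of `k`-dimensional induced hypercubes of `Ω_n`,
i.e. the coefficient of `x^k` in `Q n`. -/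
noncomputable def q (n k : ℕ) : ℤ := (Q n).coeff k

lemma Q_coeff_vanish : ∀ n k : ℕ, n ≠ 1 → n < 2 * k → (Q n).coeff k = 0 := by
  intro n
  induction n using Nat.strong_induction_on with
  | _ n ih =>
    match n with
    | 0 =>
      intro k _ hk
      obtain ⟨j, rfl⟩ : ∃ j, k = j + 1 := ⟨k - 1, by omega⟩
      simp [Q, coeff_one, coeff_X]
    | 1 => intro k h _; exact absurd rfl h
    | 2 =>
      intro k _ hk
      obtain ⟨j, rfl⟩ : ∃ j, k = j + 2 := ⟨k - 2, by omega⟩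
      simp [Q, coeff_one, coeff_X]
    | 3 =>
      intro k _ hk
      obtain ⟨j, rfl⟩ : ∃ j, k = j + 2 := ⟨k - 2, by omega⟩
      simp [Q, coeff_one, coeff_X]
    | (m + 4) =>
      intro k _ hk
      obtain ⟨j, rfl⟩ : ∃ j, k = j + 1 := ⟨k - 1, by omega⟩
      have h1 : (Q (m + 3)).coeff (j + 1) = 0 := ih _ (by omega) _ (by omega) (by omega)
      have h2 : (Q (m + 2)).coeff (j + 1) = 0 := ih _ (by omega) _ (by omega) (by omega)
      have h3 : (Q (m + 2)).coeff j = 0 := ih _ (by omega) _ (by omega) (by omega)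
      rw [Q, coeff_add, add_mul, one_mul, coeff_add, coeff_X_mul, h1, h2, h3]
      ring

lemma Q_main : ∀ m : ℕ, (Q (2 * m + 2)).coeff (m + 1) = 2 ∧
    (Q (2 * m + 3)).coeff (m + 1) = 2 * m + 3 := by
  intro m
  induction m with
  | zero => constructor <;> simp [Q, coeff_one, coeff_X]
  | succ m ih =>
    obtain ⟨ih1, ih2⟩ := ih
    have v1 : (Q (2 * m + 3)).coeff (m + 2) = 0 := Q_coeff_vanish _ _ (by omega) (by omega)
    have v2 : (Q (2 * m + 2)).coeff (m + 2) = 0 := Q_coeff_vanish _ _ (by omega) (by omega)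
    have h1 : (Q (2 * m + 4)).coeff (m + 2) = 2 := by
      rw [show 2 * m + 4 = (2 * m) + 4 by ring, Q, coeff_add, add_mul, one_mul, coeff_add,
        coeff_X_mul, v1, v2, ih1]
      ring
    have h2 : (Q (2 * m + 5)).coeff (m + 2) = 2 * m + 5 := by
      rw [show 2 * m + 5 = (2 * m + 1) + 4 by ring, Q]
      rw [show (2 * m + 1) + 3 = 2 * m + 4 by ring, show (2 * m + 1) + 2 = 2 * m + 3 by ring]
      rw [coeff_add, add_mul, one_mul, coeff_add, coeff_X_mul, h1, v1, ih2]
      ring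
    constructor
    · rw [show 2 * (m + 1) + 2 = 2 * m + 4 by ring, h1]
    · rw [show 2 * (m + 1) + 3 = 2 * m + 5 by ring, h2]
      push_cast; ring

theorem number_of_maximum_induced_hypercubes (n : ℕ) (hn : 2 ≤ n) :
    q n (n / 2) = if Even n then 2 else (n : ℤ) := by
  rcases Nat.even_or_odd n with he | ho
  · obtain ⟨k, rfl⟩ := he
    obtain ⟨m, rfl⟩ : ∃ m, k = m + 1 := ⟨k - 1, by omega⟩
    rw [show (m + 1) + (m + 1) = 2 * m + 2 by ring, show (2 * m + 2) / 2 = m + 1 by omega,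
      if_pos ⟨m + 1, by ring⟩]
    exact (Q_main m).1
  · obtain ⟨k, rfl⟩ := ho
    obtain ⟨m, rfl⟩ : ∃ m, k = m + 1 := ⟨k - 1, by omega⟩
    rw [show 2 * (m + 1) + 1 = 2 * m + 3 by ring, show (2 * m + 3) / 2 = m + 1 by omega,
      if_neg (by simp [Nat.even_iff])]
    rw [q, (Q_main m).2]
    push_cast; ring
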